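/- Let P be a line-free polyhedron in R^d and let L be a d-dimensional polyhedron whose recession cone is a linear subspace. Then R_L(P) = conv(P \ int(L)) is a polyhedron. -/

import Mathlib

open Pointwise

noncomputable section

/-- Standard inner product on `Fin d → ℝ`. -/
def dot {d : ℕ} (a x : Fin d → ℝ) : ℝ := ∑ i, a i * x i

/-- A polyhedron: intersection of finitely many closed halfspaces. -/
def IsPolyhedron {d : ℕ} (P : Set (Fin d → ℝ)) : Prop :=
  ∃ (n : ℕ) (a : Fin n → Fin d → ℝ) (b : Fin n → ℝ),
    P = {x | ∀ i, dot (a i) x ≤ b i}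

/-- A rational polyhedron: intersection of finitely many rational closed halfspaces. -/
def IsRationalPolyhedron {d : ℕ} (P : Set (Fin d → ℝ)) : Prop :=
  ∃ (n : ℕ) (a : Fin n → Fin d → ℚ) (b : Fin n → ℚ),
    P = {x | ∀ i, dot (fun j => ((a i j : ℝ))) x ≤ (b i : ℝ)}

/-- Recession cone of a set: `{u : P + u ⊆ P}`. -/
def recCone {d : ℕ} (P : Set (Fin d → ℝ)) : Set (Fin d → ℝ) :=
  {u | ∀ x ∈ P, x + u ∈ P}

/-- A set of vectors is a linear subspace. -/
def IsLinearSubspaceSet {d : ℕ} (S : Set (Fin d → ℝ)) : Prop :=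
  ∃ W : Submodule ℝ (Fin d → ℝ), S = (W : Set (Fin d → ℝ))

/-- A set is line-free if it contains no affine line. -/
def LineFree {d : ℕ} (P : Set (Fin d → ℝ)) : Prop :=
  ¬ ∃ (x v : Fin d → ℝ), v ≠ 0 ∧ ∀ t : ℝ, x + t • v ∈ P

/-- `F` is a face of the convex set `P`. -/
def IsFaceOf {d : ℕ} (P F : Set (Fin d → ℝ)) : Prop :=
  F ⊆ P ∧ Convex ℝ F ∧ ∀ x ∈ P, ∀ y ∈ P, ∀ t : ℝ, 0 < t → t < 1 →
    t • x + (1 - t) • y ∈ F → x ∈ F ∧ y ∈ F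

/-- Affine dimension of a set. -/
def adim {d : ℕ} (S : Set (Fin d → ℝ)) : ℕ :=
  Module.finrank ℝ (affineSpan ℝ S).direction

/-- Vertices: 0-dimensional faces, i.e. singleton faces. -/
def IsVertex {d : ℕ} (P : Set (Fin d → ℝ)) (x : Fin d → ℝ) : Prop :=
  IsFaceOf P {x}

/-- Union of all edges (1-dimensional faces) of `P`. -/
def edgeUnion {d : ℕ} (P : Set (Fin d → ℝ)) : Set (Fin d → ℝ) :=
  ⋃₀ {e | IsFaceOf P e ∧ adim e = 1}

/-- A representation of `L` with width `m`:
`L = {x : bᵢ - m ≤ ⟨aᵢ, x⟩ ≤ bᵢ, i ∈ [n]}` with `aᵢ ∈ ℤ^d \ {0}`, `bᵢ ∈ ℤ`. -/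
def HasWidthRep {d : ℕ} (L : Set (Fin d → ℝ)) (m : ℕ) : Prop :=
  ∃ (n : ℕ) (a : Fin n → Fin d → ℤ) (b : Fin n → ℤ),
    (∀ i, a i ≠ 0) ∧
    L = {x | ∀ i, (b i : ℝ) - (m : ℝ) ≤ dot (fun j => ((a i j : ℝ))) x ∧
        dot (fun j => ((a i j : ℝ))) x ≤ (b i : ℝ)}

/-- Max-facet-width, `+∞` if no representation exists. -/
def mfw {d : ℕ} (L : Set (Fin d → ℝ)) : ℕ∞ :=
  sInf {m : ℕ∞ | ∃ k : ℕ, m = (k : ℕ∞) ∧ HasWidthRep L k}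

/-- The set of integral points of `ℝ^d`. -/
def intPoints (d : ℕ) : Set (Fin d → ℝ) :=
  {x | ∃ z : Fin d → ℤ, x = fun i => (z i : ℝ)}

/-- A lattice-free set: `d`-dimensional closed convex set whose interior
contains no integral point. -/
def LatticeFree {d : ℕ} (L : Set (Fin d → ℝ)) : Prop :=
  IsClosed L ∧ Convex ℝ L ∧ adim L = d ∧ interior L ∩ intPoints d = ∅

/-- A maximal lattice-free set. -/
def MaxLatticeFree {d : ℕ} (L : Set (Fin d → ℝ)) : Prop :=
  LatticeFree L ∧ ∀ L' : Set (Fin d → ℝ), LatticeFree L' → L ⊆ L' → L = L'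

/-- `ℤ^d`-equivalence: `Y = U(X) + b` for a unimodular `U` and integral `b`. -/
def ZdEquiv {d : ℕ} (X Y : Set (Fin d → ℝ)) : Prop :=
  ∃ (U : Matrix (Fin d) (Fin d) ℤ) (b : Fin d → ℤ),
    (U.det = 1 ∨ U.det = -1) ∧
    Y = (fun x => (U.map (Int.cast : ℤ → ℝ)).mulVec x + fun i => (b i : ℝ)) '' X

/-- Sign vectors with an even number of `-1` entries. -/
def Aplus (d : ℕ) : Set (Fin d → ℝ) :=
  {a | (∀ i, a i = 1 ∨ a i = -1) ∧ Even {i | a i = -1}.ncard}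

/-- Sign vectors with an odd number of `-1` entries. -/
def Aminus (d : ℕ) : Set (Fin d → ℝ) :=
  {a | (∀ i, a i = 1 ∨ a i = -1) ∧ Odd {i | a i = -1}.ncard}


section aux


section dotlem
variable {d : ℕ}

lemma dot_comm (a x : Fin d → ℝ) : dot a x = dot x a := by
  unfold dot; exact Finset.sum_congr rfl fun i _ => mul_comm _ _

lemma dot_add_right (a x y : Fin d → ℝ) : dot a (x + y) = dot a x + dot a y := by
  unfold dot; rw [← Finset.sum_add_distrib]
  exact Finset.sum_congr rfl fun i _ => by simp [mul_add]

lemma dot_smul_right (a : Fin d → ℝ) (t : ℝ) (x : Fin d → ℝ) :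
    dot a (t • x) = t * dot a x := by
  unfold dot; rw [Finset.mul_sum]
  exact Finset.sum_congr rfl fun i _ => by simp [Pi.smul_apply]; ring

lemma dot_zero_right (a : Fin d → ℝ) : dot a 0 = 0 := by simp [dot]

lemma dot_zero_left (x : Fin d → ℝ) : dot 0 x = 0 := by simp [dot]

lemma dot_add_left (a b x : Fin d → ℝ) : dot (a + b) x = dot a x + dot b x := by
  rw [dot_comm, dot_add_right, dot_comm x a, dot_comm x b]

lemma dot_smul_left (a : Fin d → ℝ) (t : ℝ) (x : Fin d → ℝ) :
    dot (t • a) x = t * dot a x := by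
  rw [dot_comm, dot_smul_right, dot_comm]

lemma dot_sub_left (a b x : Fin d → ℝ) : dot (a - b) x = dot a x - dot b x := by
  unfold dot; rw [← Finset.sum_sub_distrib]
  exact Finset.sum_congr rfl fun i _ => by simp [sub_mul]

lemma dot_neg_left (a x : Fin d → ℝ) : dot (-a) x = - dot a x := by
  unfold dot; rw [← Finset.sum_neg_distrib]
  exact Finset.sum_congr rfl fun i _ => by simp

lemma dot_sum_right {ι : Type*} (s : Finset ι) (a : Fin d → ℝ) (f : ι → Fin d → ℝ) :
    dot a (∑ i ∈ s, f i) = ∑ i ∈ s, dot a (f i) := by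
  classical
  induction s using Finset.induction_on with
  | empty => simp [dot_zero_right]
  | insert a' s' h ih => rw [Finset.sum_insert h, dot_add_right, ih, Finset.sum_insert h]

lemma dot_single (i : Fin d) (x : Fin d → ℝ) : dot (Pi.single i 1) x = x i := by
  unfold dot
  rw [Finset.sum_eq_single i]
  · simp
  · intro j _ hj; simp [Pi.single_apply, hj]
  · simp

lemma dot_one (x : Fin d → ℝ) : dot 1 x = ∑ i, x i := by simp [dot]

lemma continuous_dot (a : Fin d → ℝ) : Continuous (fun x => dot a x) := by
  unfold dot
  exact continuous_finset_sum _ fun i _ => continuous_const.mul (continuous_apply i)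

end dotlem

section polylem
variable {d : ℕ}

lemma poly_closed {P : Set (Fin d → ℝ)} (h : IsPolyhedron P) : IsClosed P := by
  obtain ⟨n, a, b, rfl⟩ := h
  have : {x : Fin d → ℝ | ∀ i, dot (a i) x ≤ b i} = ⋂ i, {x | dot (a i) x ≤ b i} := by
    ext x; simp
  rw [this]
  exact isClosed_iInter fun i => isClosed_le (continuous_dot _) continuous_const

lemma poly_convex {P : Set (Fin d → ℝ)} (h : IsPolyhedron P) : Convex ℝ P := by
  obtain ⟨n, a, b, rfl⟩ := h
  intro x hx y hy s t hs ht hst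
  intro i
  have := hx i; have := hy i
  calc dot (a i) (s • x + t • y) = s * dot (a i) x + t * dot (a i) y := by
        rw [dot_add_right, dot_smul_right, dot_smul_right]
    _ ≤ s * b i + t * b i := by
        apply add_le_add (mul_le_mul_of_nonneg_left (hx i) hs) (mul_le_mul_of_nonneg_left (hy i) ht)
    _ = b i := by rw [← add_mul, hst, one_mul]

lemma poly_empty : IsPolyhedron (∅ : Set (Fin d → ℝ)) := by
  refine ⟨1, fun _ => 0, fun _ => -1, ?_⟩
  ext x
  simp only [Set.mem_setOf_eq, Set.mem_empty_iff_false, false_iff]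
  intro h
  have := h 0
  rw [dot_zero_left] at this
  linarith

lemma poly_univ : IsPolyhedron (Set.univ : Set (Fin d → ℝ)) := by
  refine ⟨0, fun i => 0, fun i => 0, ?_⟩
  ext x; simp

lemma poly_inter {P Q : Set (Fin d → ℝ)} (hP : IsPolyhedron P) (hQ : IsPolyhedron Q) :
    IsPolyhedron (P ∩ Q) := by
  obtain ⟨n, a, b, rfl⟩ := hP
  obtain ⟨m, c, e, rfl⟩ := hQ
  refine ⟨n + m, Fin.append a c, Fin.append b e, ?_⟩
  ext x
  simp only [Set.mem_inter_iff, Set.mem_setOf_eq]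
  constructor
  · rintro ⟨h1, h2⟩ i
    refine Fin.addCases (fun j => ?_) (fun j => ?_) i
    · rw [Fin.append_left, Fin.append_left]; exact h1 j
    · rw [Fin.append_right, Fin.append_right]; exact h2 j
  · intro h
    constructor
    · intro i; have := h (Fin.castAdd m i); rwa [Fin.append_left, Fin.append_left] at this
    · intro i; have := h (Fin.natAdd n i); rwa [Fin.append_right, Fin.append_right] at this

/-- A family of halfspaces over any fintype gives a polyhedron. -/
lemma poly_of_fintype {ι : Type} [Fintype ι] (a : ι → Fin d → ℝ) (b : ι → ℝ) :
    IsPolyhedron {x : Fin d → ℝ | ∀ i, dot (a i) x ≤ b i} := by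
  classical
  let e := (Fintype.equivFin ι).symm
  refine ⟨Fintype.card ι, fun i => a (e i), fun i => b (e i), ?_⟩
  ext x
  simp only [Set.mem_setOf_eq]
  constructor
  · intro h i; exact h (e i)
  · intro h i
    have := h (e.symm i); simpa using this

lemma poly_iInter {ι : Type} [Fintype ι] {S : ι → Set (Fin d → ℝ)}
    (h : ∀ i, IsPolyhedron (S i)) : IsPolyhedron (⋂ i, S i) := by
  classical
  choose n a b hS using h
  have : (⋂ i, S i) = {x : Fin d → ℝ | ∀ p : (Σ i : ι, Fin (n i)), dot (a p.1 p.2) x ≤ b p.1 p.2} := by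
    ext x
    simp only [Set.mem_iInter, Set.mem_setOf_eq]
    constructor
    · rintro hx ⟨i, j⟩
      have := hx i; rw [hS i] at this; exact this j
    · intro hx i
      rw [hS i]; intro j; exact hx ⟨i, j⟩
  rw [this]
  exact poly_of_fintype _ _

end polylem

section fm
variable {d : ℕ}

lemma dot_snoc (a : Fin (d+1) → ℝ) (x : Fin d → ℝ) (t : ℝ) :
    dot a (Fin.snoc x t) = dot (Fin.init a) x + a (Fin.last d) * t := by
  unfold dot
  rw [Fin.sum_univ_castSucc]
  congr 1
  · exact Finset.sum_congr rfl fun i _ => by simp [Fin.snoc_castSucc, Fin.init]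
  · simp

lemma fm {n : ℕ} (a : Fin n → Fin (d+1) → ℝ) (b : Fin n → ℝ) :
    IsPolyhedron {x : Fin d → ℝ | ∃ t, ∀ i, dot (a i) (Fin.snoc x t) ≤ b i} := by
  classical
  set α : Fin n → ℝ := fun i => a i (Fin.last d) with hα
  set A : Fin n → Fin d → ℝ := fun i => Fin.init (a i) with hA
  set T1 : Set (Fin d → ℝ) := {x | ∀ i : {i : Fin n // α i = 0}, dot (A i.1) x ≤ b i.1} with hT1
  set T2 : Set (Fin d → ℝ) := {x | ∀ p : {i : Fin n // 0 < α i} × {j : Fin n // α j < 0},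
      dot (α (p.1 : Fin n) • A (p.2 : Fin n) - α (p.2 : Fin n) • A (p.1 : Fin n)) x
        ≤ α (p.1 : Fin n) * b (p.2 : Fin n) - α (p.2 : Fin n) * b (p.1 : Fin n)} with hT2
  have key : {x : Fin d → ℝ | ∃ t, ∀ i, dot (a i) (Fin.snoc x t) ≤ b i} = T1 ∩ T2 := by
    ext x
    simp only [Set.mem_setOf_eq, Set.mem_inter_iff, hT1, hT2]
    constructor
    · rintro ⟨t, ht⟩
      have ht' : ∀ i, dot (A i) x + α i * t ≤ b i := by
        intro i; have := ht i; rwa [dot_snoc] at this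
      constructor
      · rintro ⟨i, hi⟩
        have := ht' i
        simp only [hi, zero_mul, add_zero] at this
        exact this
      · rintro ⟨⟨i, hi⟩, ⟨j, hj⟩⟩
        simp only
        rw [dot_sub_left, dot_smul_left, dot_smul_left]
        nlinarith [mul_le_mul_of_nonneg_left (ht' j) hi.le,
          mul_le_mul_of_nonneg_left (ht' i) (neg_nonneg.mpr hj.le)]
    · rintro ⟨h1, h2⟩
      set u : Fin n → ℝ := fun i => (b i - dot (A i) x) / α i with hu
      set posF : Finset (Fin n) := Finset.univ.filter (fun i => 0 < α i) with hposF
      set negF : Finset (Fin n) := Finset.univ.filter (fun i => α i < 0) with hnegF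
      have hcross : ∀ i ∈ posF, ∀ j ∈ negF, u j ≤ u i := by
        intro i hi j hj
        rw [hposF, Finset.mem_filter] at hi
        rw [hnegF, Finset.mem_filter] at hj
        have hi' := hi.2
        have hj' := hj.2
        have hc := h2 ⟨⟨i, hi'⟩, ⟨j, hj'⟩⟩
        simp only at hc
        rw [dot_sub_left, dot_smul_left, dot_smul_left] at hc
        have e1 : u j = (dot (A j) x - b j) / (- α j) := by
          rw [hu]; rw [div_neg, ← neg_div, neg_sub]
        rw [e1, hu]
        rw [div_le_div_iff₀ (by linarith) hi']
        nlinarith [hc]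
      set t : ℝ := if hp : posF.Nonempty then posF.inf' hp u
        else if hq : negF.Nonempty then negF.sup' hq u else 0 with hT
      have hub : ∀ i ∈ posF, t ≤ u i := by
        intro i hi
        rw [hT, dif_pos ⟨i, hi⟩]
        exact Finset.inf'_le u hi
      have hlb : ∀ j ∈ negF, u j ≤ t := by
        intro j hj
        by_cases hp : posF.Nonempty
        · rw [hT, dif_pos hp]
          exact Finset.le_inf' hp u (fun i hi => hcross i hi j hj)
        · rw [hT, dif_neg hp, dif_pos ⟨j, hj⟩]
          exact Finset.le_sup' u hj
      refine ⟨t, fun i => ?_⟩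
      rw [dot_snoc]
      have e2 : a i (Fin.last d) = α i := rfl
      have e3 : Fin.init (a i) = A i := rfl
      rw [e2, e3]
      rcases lt_trichotomy (α i) 0 with hneg | hzero | hpos
      · have hj : i ∈ negF := by rw [hnegF, Finset.mem_filter]; exact ⟨Finset.mem_univ _, hneg⟩
        have := hlb i hj
        rw [hu] at this
        rw [div_le_iff_of_neg hneg] at this
        linarith
      · have := h1 ⟨i, hzero⟩
        simp only at this
        rw [hzero, zero_mul, add_zero]
        exact this
      · have hj : i ∈ posF := by rw [hposF, Finset.mem_filter]; exact ⟨Finset.mem_univ _, hpos⟩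
        have := hub i hj
        rw [hu, le_div_iff₀ hpos] at this
        linarith
  rw [key]
  exact poly_inter (poly_of_fintype _ _) (poly_of_fintype _ _)

lemma fm' {P : Set (Fin (d+1) → ℝ)} (h : IsPolyhedron P) :
    IsPolyhedron {x : Fin d → ℝ | ∃ t, Fin.snoc x t ∈ P} := by
  obtain ⟨n, a, b, rfl⟩ := h
  exact fm a b

/-- Projection of a polyhedron onto the first `d` coordinates. -/
lemma proj_poly {k : ℕ} {P : Set (Fin (d + k) → ℝ)} (h : IsPolyhedron P) :
    IsPolyhedron {x : Fin d → ℝ | ∃ y : Fin k → ℝ, Fin.append x y ∈ P} := by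
  induction k with
  | zero =>
    have : {x : Fin d → ℝ | ∃ y : Fin 0 → ℝ, Fin.append x y ∈ P} = P := by
      ext x
      constructor
      · rintro ⟨y, hy⟩
        have : Fin.append x y = x := by
          funext i
          exact Fin.addCases (fun i => Fin.append_left x y i) (fun i => i.elim0) i
        rwa [this] at hy
      · intro hx
        refine ⟨Fin.elim0, ?_⟩
        have : Fin.append x Fin.elim0 = x := by
          funext i
          exact Fin.addCases (fun i => Fin.append_left x Fin.elim0 i) (fun i => i.elim0) i
        rwa [this]
    rw [this]; exact h
  | succ k ih =>
    have : {x : Fin d → ℝ | ∃ y : Fin (k+1) → ℝ, Fin.append x y ∈ P}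
        = {x : Fin d → ℝ | ∃ y : Fin k → ℝ, Fin.append x y ∈
            {z : Fin (d + k) → ℝ | ∃ t, Fin.snoc z t ∈ P}} := by
      ext x
      simp only [Set.mem_setOf_eq]
      constructor
      · rintro ⟨y, hy⟩
        refine ⟨Fin.init y, y (Fin.last k), ?_⟩
        rw [← Fin.append_snoc, Fin.snoc_init_self]
        exact hy
      · rintro ⟨y, t, hyt⟩
        exact ⟨Fin.snoc y t, by rwa [Fin.append_snoc]⟩
    rw [this]
    exact ih (fm' h)
end fm

section weyl
variable {d : ℕ}

/-- The set of convex+conic combinations of two finite families. -/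
def convCone {ι κ : Type} [Fintype ι] [Fintype κ] (v : ι → Fin d → ℝ) (r : κ → Fin d → ℝ) :
    Set (Fin d → ℝ) :=
  {x | ∃ (l : ι → ℝ) (m : κ → ℝ), (∀ i, 0 ≤ l i) ∧ (∀ j, 0 ≤ m j) ∧
    ∑ i, l i = 1 ∧ x = ∑ i, l i • v i + ∑ j, m j • r j}

lemma dot_append {m k : ℕ} (a : Fin m → ℝ) (b : Fin k → ℝ) (z : Fin (m + k) → ℝ) :
    dot (Fin.append a b) z
      = dot a (fun i => z (Fin.castAdd k i)) + dot b (fun i => z (Fin.natAdd m i)) := by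
  unfold dot
  rw [Fin.sum_univ_add]
  congr 1
  · exact Finset.sum_congr rfl fun i _ => by rw [Fin.append_left]
  · exact Finset.sum_congr rfl fun i _ => by rw [Fin.append_right]

lemma poly_halfspace (a : Fin d → ℝ) (b : ℝ) : IsPolyhedron {x : Fin d → ℝ | dot a x ≤ b} := by
  refine ⟨1, fun _ => a, fun _ => b, ?_⟩
  ext x
  simp only [Set.mem_setOf_eq]
  exact ⟨fun h i => h, fun h => h 0⟩

lemma weyl_fin {p q : ℕ} (v : Fin p → Fin d → ℝ) (r : Fin q → Fin d → ℝ) :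
    IsPolyhedron (convCone v r) := by
  classical
  set c0 : Fin (p + q) → Fin (d + (p + q)) → ℝ :=
    fun w => Fin.append (0 : Fin d → ℝ) (-(Pi.single w 1)) with hc0
  set cs : Fin (d + (p + q)) → ℝ :=
    Fin.append (0 : Fin d → ℝ) (Fin.append (1 : Fin p → ℝ) (0 : Fin q → ℝ)) with hcs
  set cv : Fin d → Fin (d + (p + q)) → ℝ :=
    fun i => Fin.append (Pi.single i 1)
      (Fin.append (fun j => -(v j i)) (fun j => -(r j i))) with hcv
  have part1 : ∀ (x : Fin d → ℝ) (w : Fin (p+q) → ℝ),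
      (fun j => Fin.append x w (Fin.castAdd (p+q) j)) = x := by
    intro x w; funext j; rw [Fin.append_left]
  have part2 : ∀ (x : Fin d → ℝ) (w : Fin (p+q) → ℝ),
      (fun j => Fin.append x w (Fin.natAdd d j)) = w := by
    intro x w; funext j; rw [Fin.append_right]
  have partl : ∀ (l : Fin p → ℝ) (m : Fin q → ℝ),
      (fun j => Fin.append l m (Fin.castAdd q j)) = l := by
    intro l m; funext j; rw [Fin.append_left]
  have partm : ∀ (l : Fin p → ℝ) (m : Fin q → ℝ),
      (fun j => Fin.append l m (Fin.natAdd p j)) = m := by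
    intro l m; funext j; rw [Fin.append_right]
  have c0_eval : ∀ (x : Fin d → ℝ) (w : Fin (p+q) → ℝ) (w0 : Fin (p+q)),
      dot (c0 w0) (Fin.append x w) = -(w w0) := by
    intro x w w0
    rw [hc0]
    rw [dot_append, dot_zero_left, part2, dot_neg_left, dot_single, zero_add]
  have cs_eval : ∀ (x : Fin d → ℝ) (l : Fin p → ℝ) (m : Fin q → ℝ),
      dot cs (Fin.append x (Fin.append l m)) = ∑ j, l j := by
    intro x l m
    rw [hcs, dot_append, dot_zero_left, part2, zero_add, dot_append, partl, partm,
      dot_one, dot_zero_left, add_zero]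
  have cv_eval : ∀ (x : Fin d → ℝ) (l : Fin p → ℝ) (m : Fin q → ℝ) (i : Fin d),
      dot (cv i) (Fin.append x (Fin.append l m))
        = x i - ((∑ j, l j * v j i) + ∑ j, m j * r j i) := by
    intro x l m i
    rw [hcv, dot_append, part1, part2, dot_single, dot_append, partl, partm]
    have e1 : dot (fun j => -(v j i)) l = -∑ j, l j * v j i := by
      unfold dot; rw [← Finset.sum_neg_distrib]
      exact Finset.sum_congr rfl fun j _ => by ring
    have e2 : dot (fun j => -(r j i)) m = -∑ j, m j * r j i := by
      unfold dot; rw [← Finset.sum_neg_distrib]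
      exact Finset.sum_congr rfl fun j _ => by ring
    rw [e1, e2]; ring
  have comb_eval : ∀ (l : Fin p → ℝ) (m : Fin q → ℝ) (i : Fin d),
      (∑ j, l j • v j + ∑ j, m j • r j) i = (∑ j, l j * v j i) + ∑ j, m j * r j i := by
    intro l m i
    simp [Finset.sum_apply]
  set T : Set (Fin (d + (p + q)) → ℝ) :=
    {z | ∀ w, dot (c0 w) z ≤ 0} ∩ ({z | dot cs z ≤ 1} ∩ {z | dot (-cs) z ≤ -1}) ∩
      (⋂ i : Fin d, ({z | dot (cv i) z ≤ 0} ∩ {z | dot (-(cv i)) z ≤ 0})) with hTdef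
  have hTpoly : IsPolyhedron T := by
    refine poly_inter (poly_inter (poly_of_fintype c0 (fun _ => 0))
      (poly_inter (poly_halfspace _ _) (poly_halfspace _ _))) (poly_iInter fun i => ?_)
    exact poly_inter (poly_halfspace _ _) (poly_halfspace _ _)
  have key : convCone v r = {x : Fin d → ℝ | ∃ w : Fin (p + q) → ℝ, Fin.append x w ∈ T} := by
    ext x
    simp only [convCone, Set.mem_setOf_eq, hTdef, Set.mem_inter_iff, Set.mem_iInter]
    constructor
    · rintro ⟨l, m, hl, hm, hsum, hx⟩
      refine ⟨Fin.append l m, ⟨?_, ?_, ?_⟩, fun i => ⟨?_, ?_⟩⟩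
      · intro w0
        rw [c0_eval, neg_nonpos]
        refine Fin.addCases (fun j => ?_) (fun j => ?_) w0
        · rw [Fin.append_left]; exact hl j
        · rw [Fin.append_right]; exact hm j
      · rw [cs_eval, hsum]
      · rw [dot_neg_left, cs_eval, hsum]
      · rw [cv_eval, hx, comb_eval]; linarith [le_refl (0:ℝ)]
      · rw [dot_neg_left, cv_eval, hx, comb_eval]; linarith [le_refl (0:ℝ)]
    · rintro ⟨w, ⟨hw0, hs1, hs2⟩, hcoord⟩
      set l : Fin p → ℝ := fun j => w (Fin.castAdd q j) with hldef
      set m : Fin q → ℝ := fun j => w (Fin.natAdd p j) with hmdef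
      have hwlm : w = Fin.append l m := by
        funext j
        refine Fin.addCases (fun j => ?_) (fun j => ?_) j
        · rw [Fin.append_left, hldef]
        · rw [Fin.append_right, hmdef]
      rw [hwlm] at hw0 hs1 hs2 hcoord
      refine ⟨l, m, ?_, ?_, ?_, ?_⟩
      · intro j
        have := hw0 (Fin.castAdd q j)
        rw [c0_eval, neg_nonpos, Fin.append_left] at this
        exact this
      · intro j
        have := hw0 (Fin.natAdd p j)
        rw [c0_eval, neg_nonpos, Fin.append_right] at this
        exact this
      · rw [cs_eval] at hs1
        rw [dot_neg_left, cs_eval] at hs2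
        linarith
      · funext i
        have h1 := (hcoord i).1
        have h2 := (hcoord i).2
        rw [cv_eval] at h1
        rw [dot_neg_left, cv_eval] at h2
        rw [comb_eval]
        linarith
  rw [key]
  exact proj_poly (d := d) (k := p + q) hTpoly

/-- Weyl over arbitrary fintypes by reindexing. -/
lemma weyl {ι κ : Type} [Fintype ι] [Fintype κ] (v : ι → Fin d → ℝ) (r : κ → Fin d → ℝ) :
    IsPolyhedron (convCone v r) := by
  classical
  set e := Fintype.equivFin ι
  set f := Fintype.equivFin κ
  have : convCone v r = convCone (v ∘ e.symm) (r ∘ f.symm) := by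
    ext x
    simp only [convCone, Set.mem_setOf_eq]
    constructor
    · rintro ⟨l, m, hl, hm, hsum, hx⟩
      refine ⟨l ∘ e.symm, m ∘ f.symm, fun i => hl _, fun j => hm _, ?_, ?_⟩
      · exact (Fintype.sum_equiv e l (l ∘ e.symm) (fun i => by simp)).symm.trans hsum
      · rw [hx]
        congr 1
        · exact Fintype.sum_equiv e _ _ (fun i => by simp)
        · exact Fintype.sum_equiv f _ _ (fun j => by simp)
    · rintro ⟨l, m, hl, hm, hsum, hx⟩
      refine ⟨l ∘ e, m ∘ f, fun i => hl _, fun j => hm _, ?_, ?_⟩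
      · exact (Fintype.sum_equiv e (l ∘ e) l (fun i => rfl)).trans hsum
      · rw [hx]
        congr 1
        · exact (Fintype.sum_equiv e (fun i => (l ∘ e) i • v i) (fun i => l i • (v ∘ e.symm) i)
            (fun i => by simp)).symm
        · exact (Fintype.sum_equiv f (fun j => (m ∘ f) j • r j) (fun j => m j • (r ∘ f.symm) j)
            (fun j => by simp)).symm
  rw [this]
  exact weyl_fin _ _

end weyl

section cones
variable {d : ℕ}

def coneCombo {κ : Type} [Fintype κ] (r : κ → Fin d → ℝ) : Set (Fin d → ℝ) :=
  {x | ∃ m : κ → ℝ, (∀ j, 0 ≤ m j) ∧ x = ∑ j, m j • r j}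

lemma coneCombo_eq_convCone {κ : Type} [Fintype κ] (r : κ → Fin d → ℝ) :
    coneCombo r = convCone (fun _ : Fin 1 => (0 : Fin d → ℝ)) r := by
  ext x
  simp only [coneCombo, convCone, Set.mem_setOf_eq]
  constructor
  · rintro ⟨m, hm, hx⟩
    exact ⟨fun _ => 1, m, fun _ => zero_le_one, hm, by simp, by simp [hx]⟩
  · rintro ⟨l, m, _, hm, _, hx⟩
    exact ⟨m, hm, by simpa using hx⟩

lemma coneCombo_poly {κ : Type} [Fintype κ] (r : κ → Fin d → ℝ) :
    IsPolyhedron (coneCombo r) := by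
  rw [coneCombo_eq_convCone]; exact weyl _ _

lemma zero_mem_coneCombo {κ : Type} [Fintype κ] (r : κ → Fin d → ℝ) :
    (0 : Fin d → ℝ) ∈ coneCombo r := ⟨0, by simp, by simp⟩

lemma gen_mem_coneCombo {κ : Type} [Fintype κ] (r : κ → Fin d → ℝ) (j : κ) :
    r j ∈ coneCombo r := by
  classical
  refine ⟨Pi.single j 1, fun k => by simp [Pi.single_apply]; split <;> norm_num, ?_⟩
  rw [Finset.sum_eq_single j]
  · simp
  · intro k _ hk; simp [Pi.single_apply, hk]
  · simp

lemma coneCombo_smul_mem {κ : Type} [Fintype κ] {r : κ → Fin d → ℝ} {x : Fin d → ℝ}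
    (hx : x ∈ coneCombo r) {t : ℝ} (ht : 0 ≤ t) : t • x ∈ coneCombo r := by
  obtain ⟨m, hm, rfl⟩ := hx
  refine ⟨t • m, fun j => mul_nonneg ht (hm j), ?_⟩
  rw [Finset.smul_sum]
  exact Finset.sum_congr rfl fun j _ => by simp [smul_smul]

lemma cone_separation {κ : Type} [Fintype κ] (r : κ → Fin d → ℝ) (x : Fin d → ℝ)
    (hx : x ∉ coneCombo r) :
    ∃ w : Fin d → ℝ, (∀ j, dot w (r j) ≤ 0) ∧ 0 < dot w x := by
  classical
  have hconv : Convex ℝ (coneCombo r) := poly_convex (coneCombo_poly r)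
  have hclosed : IsClosed (coneCombo r) := poly_closed (coneCombo_poly r)
  obtain ⟨f, u, hfu, hux⟩ := geometric_hahn_banach_closed_point hconv hclosed hx
  have hu0 : 0 < u := by simpa using hfu 0 (zero_mem_coneCombo r)
  have hfle : ∀ y ∈ coneCombo r, f y ≤ 0 := by
    intro y hy
    by_contra h
    push_neg at h
    have ht : 0 ≤ (u + 1) / f y := div_nonneg (by linarith) h.le
    have := hfu _ (coneCombo_smul_mem hy ht)
    rw [map_smul, smul_eq_mul, div_mul_cancel₀ _ (ne_of_gt h)] at this
    linarith
  set w : Fin d → ℝ := fun i => f (Pi.single i 1) with hwdef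
  have hw : ∀ y, dot w y = f y := by
    intro y
    have hy : y = ∑ i, y i • (Pi.single i 1 : Fin d → ℝ) := by
      funext k
      rw [Finset.sum_apply]
      simp [Pi.single_apply]
    calc dot w y = ∑ i, f (Pi.single i 1) * y i := rfl
      _ = ∑ i, f (y i • (Pi.single i 1 : Fin d → ℝ)) := by
          exact Finset.sum_congr rfl fun i _ => by rw [map_smul, smul_eq_mul, mul_comm]
      _ = f y := by rw [← map_sum, ← hy]
  refine ⟨w, fun j => ?_, ?_⟩
  · rw [hw]; exact hfle _ (gen_mem_coneCombo r j)
  · rw [hw]; linarith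

lemma polyCone_fg {ι : Type} [Fintype ι] (a : ι → Fin d → ℝ) :
    ∃ (N : ℕ) (s : Fin N → Fin d → ℝ),
      (∀ k i, dot (a i) (s k) ≤ 0) ∧
      {x : Fin d → ℝ | ∀ i, dot (a i) x ≤ 0} = coneCombo s := by
  classical
  obtain ⟨N, s, c, hD⟩ := coneCombo_poly a
  have h0D := zero_mem_coneCombo a
  have hc0 : ∀ k, 0 ≤ c k := by
    intro k
    have h := h0D
    rw [hD] at h
    have := h k
    rwa [dot_zero_right] at this
  have hDzero : coneCombo a = {y : Fin d → ℝ | ∀ k, dot (s k) y ≤ 0} := by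
    ext y
    constructor
    · intro hy k
      by_contra hpos
      push_neg at hpos
      set t := (c k + 1) / dot (s k) y with htdef
      have ht : 0 ≤ t := div_nonneg (by linarith [hc0 k]) hpos.le
      have hmem := coneCombo_smul_mem hy ht
      rw [hD] at hmem
      have := hmem k
      rw [dot_smul_right, htdef, div_mul_cancel₀ _ (ne_of_gt hpos)] at this
      linarith
    · intro hy
      rw [hD]
      intro k
      exact le_trans (hy k) (hc0 k)
  have hgen : ∀ (k : Fin N) (i : ι), dot (a i) (s k) ≤ 0 := by
    intro k i
    have hai : a i ∈ coneCombo a := gen_mem_coneCombo a i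
    rw [hDzero] at hai
    rw [dot_comm]
    exact hai k
  refine ⟨N, s, hgen, ?_⟩
  ext x
  simp only [Set.mem_setOf_eq]
  constructor
  · intro hx
    by_contra hxE
    obtain ⟨w, hw1, hw2⟩ := cone_separation s x hxE
    have hwD : w ∈ coneCombo a := by
      rw [hDzero]
      intro k
      rw [dot_comm]
      exact hw1 k
    obtain ⟨mu, hmu, hwsum⟩ := hwD
    have hcomp : dot w x = ∑ i, mu i * dot (a i) x := by
      rw [dot_comm, hwsum, dot_sum_right]
      exact Finset.sum_congr rfl fun i _ => by rw [dot_smul_right, dot_comm]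
    have hle : dot w x ≤ 0 := by
      rw [hcomp]
      apply Finset.sum_nonpos
      intro i _
      have := mul_le_mul_of_nonneg_left (hx i) (hmu i)
      simpa using this
    linarith
  · rintro ⟨mu, hmu, rfl⟩ i
    rw [dot_sum_right]
    apply Finset.sum_nonpos
    intro k _
    rw [dot_smul_right]
    have := mul_le_mul_of_nonneg_left (hgen k i) (hmu k)
    simpa using this

lemma dot_snoc_left (a : Fin d → ℝ) (β : ℝ) (z : Fin (d+1) → ℝ) :
    dot (Fin.snoc a β) z = dot a (Fin.init z) + β * z (Fin.last d) := by
  unfold dot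
  rw [Fin.sum_univ_castSucc]
  congr 1
  · exact Finset.sum_congr rfl fun i _ => by simp [Fin.snoc_castSucc, Fin.init]
  · simp

lemma minkowski {n : ℕ} (a : Fin n → Fin d → ℝ) (b : Fin n → ℝ) :
    ∃ (ι κ : Type) (_ : Fintype ι) (_ : Fintype κ) (v : ι → Fin d → ℝ) (r : κ → Fin d → ℝ),
      {x : Fin d → ℝ | ∀ i, dot (a i) x ≤ b i} = convCone v r := by
  classical
  set A : Option (Fin n) → Fin (d+1) → ℝ :=
    fun o => Option.rec (Fin.snoc (0 : Fin d → ℝ) (-1)) (fun i => Fin.snoc (a i) (-(b i))) o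
    with hA
  obtain ⟨N, s, hgen, hC⟩ := polyCone_fg A
  set τ : Fin N → ℝ := fun k => s k (Fin.last d) with hτdef
  have hτ : ∀ k, 0 ≤ τ k := by
    intro k
    have := hgen k none
    rw [hA] at this
    simp only at this
    rw [dot_snoc_left, dot_zero_left, zero_add, neg_one_mul, neg_nonpos] at this
    exact this
  have hsQ : ∀ (k : Fin N) (i : Fin n), dot (a i) (Fin.init (s k)) ≤ b i * τ k := by
    intro k i
    have := hgen k (some i)
    rw [hA] at this
    simp only at this
    rw [dot_snoc_left] at this
    nlinarith [this]
  refine ⟨{k : Fin N // τ k ≠ 0}, {k : Fin N // τ k = 0}, inferInstance, inferInstance,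
    fun k => (τ k.1)⁻¹ • Fin.init (s k.1), fun k => Fin.init (s k.1), ?_⟩
  ext x
  simp only [Set.mem_setOf_eq]
  constructor
  · intro hx
    have hz : Fin.snoc x 1 ∈ {z : Fin (d+1) → ℝ | ∀ o, dot (A o) z ≤ 0} := by
      intro o
      cases o with
      | none =>
        rw [hA]
        simp only
        rw [dot_snoc_left, dot_zero_left, zero_add, Fin.snoc_last]
        norm_num
      | some i =>
        rw [hA]
        simp only
        rw [dot_snoc_left, Fin.init_snoc, Fin.snoc_last]
        have := hx i
        linarith
    rw [hC] at hz
    obtain ⟨mu, hmu, hzsum⟩ := hz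
    have hlast : (1 : ℝ) = ∑ k, mu k * τ k := by
      have := congrFun hzsum (Fin.last d)
      rw [Fin.snoc_last, Finset.sum_apply] at this
      simpa [hτdef] using this
    have hinit : x = ∑ k, mu k • Fin.init (s k) := by
      funext j
      have := congrFun hzsum (Fin.castSucc j)
      rw [Fin.snoc_castSucc, Finset.sum_apply] at this
      rw [Finset.sum_apply]
      simpa [Fin.init] using this
    refine ⟨fun k => mu k.1 * τ k.1, fun k => mu k.1, fun k => mul_nonneg (hmu _) (hτ _),
      fun k => hmu _, ?_, ?_⟩
    · have hsub : ∑ k ∈ Finset.univ.filter (fun k => τ k ≠ 0), mu k * τ k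
          = ∑ k : {k : Fin N // τ k ≠ 0}, mu k.1 * τ k.1 :=
        Finset.sum_subtype _ (by simp) _
      have hsplit := Finset.sum_filter_add_sum_filter_not Finset.univ
        (fun k => τ k ≠ 0) (fun k => mu k * τ k)
      have hzero : ∑ k ∈ Finset.univ.filter (fun k => ¬ τ k ≠ 0), mu k * τ k = 0 := by
        apply Finset.sum_eq_zero
        intro k hk
        rw [Finset.mem_filter, not_not] at hk
        rw [hk.2, mul_zero]
      rw [← hsub]
      linarith [hlast]
    · have key1 : ∀ (k : {k : Fin N // τ k ≠ 0}),
          (mu k.1 * τ k.1) • ((τ k.1)⁻¹ • Fin.init (s k.1)) = mu k.1 • Fin.init (s k.1) := by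
        intro k
        rw [smul_smul]
        congr 1
        rw [mul_assoc, mul_inv_cancel₀ k.2, mul_one]
      have hsub1 : ∑ k : {k : Fin N // τ k ≠ 0}, (mu k.1 * τ k.1) • ((τ k.1)⁻¹ • Fin.init (s k.1))
          = ∑ k ∈ Finset.univ.filter (fun k => τ k ≠ 0), mu k • Fin.init (s k) := by
        rw [Finset.sum_congr rfl (fun k _ => key1 k)]
        exact (Finset.sum_subtype _ (by simp) (fun k => mu k • Fin.init (s k))).symm
      have hsub2 : ∑ k : {k : Fin N // τ k = 0}, mu k.1 • Fin.init (s k.1)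
          = ∑ k ∈ Finset.univ.filter (fun k => ¬ τ k ≠ 0), mu k • Fin.init (s k) := by
        exact (Finset.sum_subtype _ (by simp) (fun k => mu k • Fin.init (s k))).symm
      have hsplit := Finset.sum_filter_add_sum_filter_not Finset.univ
        (fun k => τ k ≠ 0) (fun k => mu k • Fin.init (s k))
      rw [hinit]
      rw [show (∑ k : {k : Fin N // τ k ≠ 0}, (fun k : {k : Fin N // τ k ≠ 0} => mu k.1 * τ k.1) k • (fun k : {k : Fin N // τ k ≠ 0} => (τ k.1)⁻¹ • Fin.init (s k.1)) k) = ∑ k : {k : Fin N // τ k ≠ 0}, (mu k.1 * τ k.1) • ((τ k.1)⁻¹ • Fin.init (s k.1)) from rfl]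
      rw [hsub1, hsub2, hsplit]
  · rintro ⟨l, m, hl, hm, hsum, rfl⟩ i
    rw [dot_add_right, dot_sum_right, dot_sum_right]
    beta_reduce
    have h1 : ∑ k : {k : Fin N // τ k ≠ 0}, dot (a i) (l k • (τ k.1)⁻¹ • Fin.init (s k.1))
        ≤ ∑ k : {k : Fin N // τ k ≠ 0}, l k * b i := by
      apply Finset.sum_le_sum
      intro k _
      rw [dot_smul_right, dot_smul_right]
      have hτk : 0 < τ k.1 := lt_of_le_of_ne (hτ k.1) (Ne.symm k.2)
      have := hsQ k.1 i
      have h2 : (τ k.1)⁻¹ * dot (a i) (Fin.init (s k.1)) ≤ b i := by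
        rw [inv_mul_le_iff₀ hτk]
        linarith [hsQ k.1 i]
      exact mul_le_mul_of_nonneg_left h2 (hl k)
    have h2 : ∑ k : {k : Fin N // τ k = 0}, dot (a i) (m k • Fin.init (s k.1)) ≤ 0 := by
      apply Finset.sum_nonpos
      intro k _
      rw [dot_smul_right]
      have := hsQ k.1 i
      rw [k.2, mul_zero] at this
      exact mul_nonpos_iff.mpr (Or.inl ⟨hm k, this⟩)
    have h3 : ∑ k : {k : Fin N // τ k ≠ 0}, l k * b i = b i := by
      rw [← Finset.sum_mul, hsum, one_mul]
    linarith
end cones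

section util
variable {d : ℕ}

lemma convCone_reindex {ι κ ι' κ' : Type} [Fintype ι] [Fintype κ] [Fintype ι'] [Fintype κ']
    (e : ι ≃ ι') (f : κ ≃ κ') (v : ι → Fin d → ℝ) (r : κ → Fin d → ℝ) :
    convCone v r = convCone (v ∘ e.symm) (r ∘ f.symm) := by
  ext x
  simp only [convCone, Set.mem_setOf_eq]
  constructor
  · rintro ⟨l, m, hl, hm, hsum, hx⟩
    refine ⟨l ∘ e.symm, m ∘ f.symm, fun i => hl _, fun j => hm _, ?_, ?_⟩
    · exact (Fintype.sum_equiv e l (l ∘ e.symm) (fun i => by simp)).symm.trans hsum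
    · rw [hx]
      congr 1
      · exact Fintype.sum_equiv e _ _ (fun i => by simp)
      · exact Fintype.sum_equiv f _ _ (fun j => by simp)
  · rintro ⟨l, m, hl, hm, hsum, hx⟩
    refine ⟨l ∘ e, m ∘ f, fun i => hl _, fun j => hm _, ?_, ?_⟩
    · exact (Fintype.sum_equiv e (l ∘ e) l (fun i => rfl)).trans hsum
    · rw [hx]
      congr 1
      · exact (Fintype.sum_equiv e (fun i => (l ∘ e) i • v i) (fun i => l i • (v ∘ e.symm) i)
          (fun i => by simp)).symm
      · exact (Fintype.sum_equiv f (fun j => (m ∘ f) j • r j) (fun j => m j • (r ∘ f.symm) j)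
          (fun j => by simp)).symm

lemma minkowski_fin {n : ℕ} (a : Fin n → Fin d → ℝ) (b : Fin n → ℝ) :
    ∃ (p q : ℕ) (v : Fin p → Fin d → ℝ) (r : Fin q → Fin d → ℝ),
      {x : Fin d → ℝ | ∀ i, dot (a i) x ≤ b i} = convCone v r := by
  obtain ⟨ι, κ, hι, hκ, v, r, hQ⟩ := minkowski a b
  exact ⟨Fintype.card ι, Fintype.card κ, v ∘ (Fintype.equivFin ι).symm,
    r ∘ (Fintype.equivFin κ).symm,
    hQ.trans (convCone_reindex (Fintype.equivFin ι) (Fintype.equivFin κ) v r)⟩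

lemma convCone_convex {ι κ : Type} [Fintype ι] [Fintype κ] (v : ι → Fin d → ℝ)
    (r : κ → Fin d → ℝ) : Convex ℝ (convCone v r) := poly_convex (weyl v r)

lemma convCone_v_mem {ι κ : Type} [Fintype ι] [Fintype κ] (v : ι → Fin d → ℝ)
    (r : κ → Fin d → ℝ) (j : ι) : v j ∈ convCone v r := by
  classical
  refine ⟨Pi.single j 1, 0, fun i => by simp [Pi.single_apply]; split <;> norm_num,
    fun _ => le_refl 0, by simp [Pi.single_apply], ?_⟩
  rw [Finset.sum_eq_single j]
  · simp
  · intro k _ hk; simp [Pi.single_apply, hk]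
  · simp

lemma convCone_add_ray {ι κ : Type} [Fintype ι] [Fintype κ] {v : ι → Fin d → ℝ}
    {r : κ → Fin d → ℝ} {x : Fin d → ℝ} (hx : x ∈ convCone v r) (j : κ) {t : ℝ} (ht : 0 ≤ t) :
    x + t • r j ∈ convCone v r := by
  classical
  obtain ⟨l, m, hl, hm, hsum, rfl⟩ := hx
  refine ⟨l, m + t • (Pi.single j 1 : κ → ℝ), hl, ?_, hsum, ?_⟩
  · intro k
    simp only [Pi.add_apply, Pi.smul_apply, Pi.single_apply, smul_eq_mul]
    split
    · have := hm k; linarith [mul_le_mul_of_nonneg_left (le_refl (1:ℝ)) ht]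
    · simpa using hm k
  · have : ∑ k, (m + t • (Pi.single j 1 : κ → ℝ)) k • r k = ∑ k, m k • r k + t • r j := by
      have e1 : ∀ k, (m + t • (Pi.single j 1 : κ → ℝ)) k • r k
          = m k • r k + ((t • (Pi.single j 1 : κ → ℝ)) k) • r k := by
        intro k; rw [Pi.add_apply, add_smul]
      rw [Finset.sum_congr rfl (fun k _ => e1 k), Finset.sum_add_distrib]
      congr 1
      rw [Finset.sum_eq_single j]
      · simp
      · intro k _ hk; simp [Pi.single_apply, hk]
      · simp
    rw [this]
    abel

lemma slope_nonpos {A B s : ℝ} (h : ∀ t : ℝ, 0 ≤ t → A + t * s ≤ B) : s ≤ 0 := by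
  by_contra hs
  push_neg at hs
  have h0 : A ≤ B := by simpa using h 0 (le_refl 0)
  have ht : 0 ≤ (B - A)/s + 1 := by
    have := div_nonneg (by linarith : (0:ℝ) ≤ B - A) hs.le
    linarith
  have := h ((B - A)/s + 1) ht
  rw [add_mul, div_mul_cancel₀ _ (ne_of_gt hs), one_mul] at this
  linarith

lemma sigma_dite_sum {K : Type} [Fintype K] [DecidableEq K] {p : K → ℕ} {M : Type}
    [AddCommMonoid M] (k : K) (F : Fin (p k) → M) :
    ∑ m : (Σ k', Fin (p k')), (if h : m.1 = k then F (h ▸ m.2) else 0) = ∑ j, F j := by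
  rw [show (∑ m : (Σ k', Fin (p k')), (if h : m.1 = k then F (h ▸ m.2) else 0))
      = ∑ k', ∑ j : Fin (p k'), (if h : k' = k then F (h ▸ j) else 0) from by
      rw [Finset.sum_sigma']
      rfl]
  rw [Finset.sum_eq_single k]
  · exact Finset.sum_congr rfl fun j _ => by rw [dif_pos rfl]
  · intro k' _ hk'
    exact Finset.sum_eq_zero fun j _ => by rw [dif_neg hk']
  · intro h
    exact absurd (Finset.mem_univ k) h

lemma dot_self_pos {a : Fin d → ℝ} (ha : a ≠ 0) : 0 < dot a a := by
  have hex : ∃ i, a i ≠ 0 := by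
    by_contra h
    push_neg at h
    exact ha (funext h)
  obtain ⟨i, hi⟩ := hex
  exact Finset.sum_pos' (fun j _ => mul_self_nonneg (a j))
    ⟨i, Finset.mem_univ i, mul_self_pos.mpr hi⟩

end util

section main
variable {d : ℕ}

lemma main_hull {nP nL : ℕ} (c : Fin nP → Fin d → ℝ) (e : Fin nP → ℝ)
    (a : Fin nL → Fin d → ℝ) (b : Fin nL → ℝ)
    (hW : ∀ u : Fin d → ℝ, (∀ k, dot (a k) u ≤ 0) → ∀ k, dot (a k) u = 0) :
    IsPolyhedron (convexHull ℝ (⋃ k : {k : Fin nL // a k ≠ 0},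
      ({x : Fin d → ℝ | ∀ i, dot (c i) x ≤ e i} ∩ {x | b k.1 ≤ dot (a k.1) x}))) := by
  classical
  set Pset : Set (Fin d → ℝ) := {x | ∀ i, dot (c i) x ≤ e i} with hPset
  set Q : Fin nL → Set (Fin d → ℝ) := fun k => Pset ∩ {x | b k ≤ dot (a k) x} with hQ
  have hUeq : (⋃ k : {k : Fin nL // a k ≠ 0}, (Pset ∩ {x | b k.1 ≤ dot (a k.1) x}))
      = ⋃ k : {k : Fin nL // a k ≠ 0 ∧ (Q k).Nonempty}, Q k.1 := by
    ext x
    simp only [Set.mem_iUnion]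
    constructor
    · rintro ⟨k, hx⟩
      exact ⟨⟨k.1, k.2, ⟨x, hx⟩⟩, hx⟩
    · rintro ⟨k, hx⟩
      exact ⟨⟨k.1, k.2.1⟩, hx⟩
  rw [hUeq]
  set K := {k : Fin nL // a k ≠ 0 ∧ (Q k).Nonempty} with hKdef
  by_cases hKne : Nonempty K
  case neg =>
    haveI : IsEmpty K := not_nonempty_iff.mp hKne
    rw [Set.iUnion_of_empty, convexHull_empty]
    exact poly_empty
  case pos =>
  have hQrep : ∀ k : K, ∃ (p q : ℕ) (v : Fin p → Fin d → ℝ) (r : Fin q → Fin d → ℝ),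
      Q k.1 = convCone v r := by
    intro k
    have hrep : Q k.1 = {x : Fin d → ℝ | ∀ i : Fin (nP + 1),
        dot ((Fin.snoc c (-(a k.1)) : Fin (nP+1) → Fin d → ℝ) i) x
          ≤ (Fin.snoc e (-(b k.1)) : Fin (nP+1) → ℝ) i} := by
      ext x
      simp only [hQ, hPset, Set.mem_inter_iff, Set.mem_setOf_eq]
      constructor
      · rintro ⟨h1, h2⟩ i
        refine Fin.lastCases ?_ (fun i => ?_) i
        · rw [Fin.snoc_last, Fin.snoc_last, dot_neg_left]
          linarith
        · rw [Fin.snoc_castSucc, Fin.snoc_castSucc]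
          exact h1 i
      · intro h
        constructor
        · intro i
          have := h i.castSucc
          rwa [Fin.snoc_castSucc, Fin.snoc_castSucc] at this
        · have := h (Fin.last nP)
          rw [Fin.snoc_last, Fin.snoc_last, dot_neg_left] at this
          linarith
    rw [hrep]
    exact minkowski_fin _ _
  choose p q v r hQk using hQrep
  have hYpoly : IsPolyhedron (convCone (fun m : (Σ k : K, Fin (p k)) => v m.1 m.2)
      (fun m : (Σ k : K, Fin (q k)) => r m.1 m.2)) := weyl _ _
  have hXY : convexHull ℝ (⋃ k : K, Q k.1)
      = convCone (fun m : (Σ k : K, Fin (p k)) => v m.1 m.2)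
        (fun m : (Σ k : K, Fin (q k)) => r m.1 m.2) := by
    apply Set.Subset.antisymm
    · apply convexHull_min _ (convCone_convex _ _)
      apply Set.iUnion_subset
      intro k x hx
      rw [hQk k] at hx
      obtain ⟨l, m, hl, hm, hsum, rfl⟩ := hx
      refine ⟨fun mm => if h : mm.1 = k then l (h ▸ mm.2) else 0,
        fun mm => if h : mm.1 = k then m (h ▸ mm.2) else 0,
        fun mm => by dsimp only; split
                     · exact hl _
                     · exact le_refl 0,
        fun mm => by dsimp only; split
                     · exact hm _
                     · exact le_refl 0, ?_, ?_⟩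
      · rw [sigma_dite_sum k l]
        exact hsum
      · beta_reduce
        have e1 : ∀ mm : (Σ k' : K, Fin (p k')),
            (if h : mm.1 = k then l (h ▸ mm.2) else 0) • v mm.1 mm.2
            = (if h : mm.1 = k then (fun j => l j • v k j) (h ▸ mm.2) else 0) := by
          rintro ⟨k', j⟩
          by_cases h : k' = k
          · subst h
            rw [dif_pos rfl, dif_pos rfl]
          · rw [dif_neg h, dif_neg h, zero_smul]
        have e2 : ∀ mm : (Σ k' : K, Fin (q k')),
            (if h : mm.1 = k then m (h ▸ mm.2) else 0) • r mm.1 mm.2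
            = (if h : mm.1 = k then (fun j => m j • r k j) (h ▸ mm.2) else 0) := by
          rintro ⟨k', j⟩
          by_cases h : k' = k
          · subst h
            rw [dif_pos rfl, dif_pos rfl]
          · rw [dif_neg h, dif_neg h, zero_smul]
        rw [Finset.sum_congr rfl (fun mm _ => e1 mm), Finset.sum_congr rfl (fun mm _ => e2 mm),
          sigma_dite_sum k (fun j => l j • v k j), sigma_dite_sum k (fun j => m j • r k j)]
    · intro y hy
      obtain ⟨lst, mst, hlst, hmst, hsumst, rfl⟩ := hy
      set X := convexHull ℝ (⋃ k : K, Q k.1) with hX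
      have hXconv : Convex ℝ X := convex_convexHull ℝ _
      have hQsubX : ∀ k : K, Q k.1 ⊆ X := fun k =>
        (Set.subset_iUnion (fun k : K => Q k.1) k).trans (subset_convexHull ℝ _)
      have hvX : ∀ mm : (Σ k : K, Fin (p k)), v mm.1 mm.2 ∈ X := by
        intro mm
        apply hQsubX mm.1
        rw [hQk mm.1]
        exact convCone_v_mem _ _ mm.2
      have hrayP : ∀ mm : (Σ k : K, Fin (q k)), ∀ i, dot (c i) (r mm.1 mm.2) ≤ 0 := by
        intro mm i
        obtain ⟨x₀, hx₀⟩ := mm.1.2.2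
        apply slope_nonpos (A := dot (c i) x₀) (B := e i)
        intro t ht
        have hmem : x₀ + t • r mm.1 mm.2 ∈ Q mm.1.1 := by
          rw [hQk mm.1]
          exact convCone_add_ray (by rw [← hQk mm.1]; exact hx₀) mm.2 ht
        have hp : dot (c i) (x₀ + t • r mm.1 mm.2) ≤ e i := hmem.1 i
        rw [dot_add_right, dot_smul_right] at hp
        linarith
      have hray : ∀ (mm : (Σ k : K, Fin (q k))) (t : ℝ), 0 ≤ t →
          ∀ x ∈ X, x + t • r mm.1 mm.2 ∈ X := by
        intro mm t ht x hx
        have hZ : X ⊆ {z | ∀ s : ℝ, 0 ≤ s → z + s • r mm.1 mm.2 ∈ X} := by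
          apply convexHull_min
          · apply Set.iUnion_subset
            intro k' z hz s hs
            by_cases hA : ∀ k₀, dot (a k₀) (r mm.1 mm.2) ≤ 0
            · have hzero := hW (r mm.1 mm.2) hA
              apply hQsubX k'
              refine ⟨?_, ?_⟩
              · intro i
                have h1 : dot (c i) z ≤ e i := hz.1 i
                show dot (c i) (z + s • r mm.1 mm.2) ≤ e i
                rw [dot_add_right, dot_smul_right]
                have h2 := hrayP mm i
                nlinarith
              · have h2 : b k'.1 ≤ dot (a k'.1) z := hz.2
                show b k'.1 ≤ dot (a k'.1) (z + s • r mm.1 mm.2)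
                rw [dot_add_right, dot_smul_right, hzero k'.1, mul_zero, add_zero]
                exact h2
            · push_neg at hA
              obtain ⟨k₀, hk₀⟩ := hA
              by_cases hs0 : s = 0
              · subst hs0
                rw [zero_smul, add_zero]
                exact hQsubX k' hz
              have hspos : 0 < s := lt_of_le_of_ne hs (Ne.symm hs0)
              set T := max s ((b k₀ - dot (a k₀) z)/(dot (a k₀) (r mm.1 mm.2))) with hTdef
              have hTs : s ≤ T := le_max_left _ _
              have hTpos : 0 < T := lt_of_lt_of_le hspos hTs
              have hzT : z + T • r mm.1 mm.2 ∈ Q k₀ := by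
                refine ⟨?_, ?_⟩
                · intro i
                  have h1 : dot (c i) z ≤ e i := hz.1 i
                  show dot (c i) (z + T • r mm.1 mm.2) ≤ e i
                  rw [dot_add_right, dot_smul_right]
                  have h2 := hrayP mm i
                  nlinarith
                · show b k₀ ≤ dot (a k₀) (z + T • r mm.1 mm.2)
                  rw [dot_add_right, dot_smul_right]
                  have hT2 : (b k₀ - dot (a k₀) z)/(dot (a k₀) (r mm.1 mm.2)) ≤ T :=
                    le_max_right _ _
                  rw [div_le_iff₀ hk₀] at hT2
                  linarith
              have hane : a k₀ ≠ 0 := by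
                intro h0
                rw [h0, dot_zero_left] at hk₀
                exact lt_irrefl 0 hk₀
              have hzTX : z + T • r mm.1 mm.2 ∈ X :=
                hQsubX ⟨k₀, hane, ⟨z + T • r mm.1 mm.2, hzT⟩⟩ hzT
              have hzX : z ∈ X := hQsubX k' hz
              have hcomb : z + s • r mm.1 mm.2
                  = (1 - s/T) • z + (s/T) • (z + T • r mm.1 mm.2) := by
                rw [smul_add, smul_smul, div_mul_cancel₀ _ (ne_of_gt hTpos), sub_smul, one_smul]
                abel
              rw [hcomb]
              exact hXconv hzX hzTX (sub_nonneg.mpr ((div_le_one hTpos).mpr hTs))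
                (div_nonneg hs hTpos.le) (by ring)
          · intro z1 hz1 z2 hz2 u1 u2 hu1 hu2 hu12
            intro s hs
            have e1 : u1 • (z1 + s • r mm.1 mm.2) + u2 • (z2 + s • r mm.1 mm.2)
                = (u1 • z1 + u2 • z2) + ((u1 + u2) • (s • r mm.1 mm.2)) := by
              rw [smul_add, smul_add, add_smul]
              abel
            rw [hu12, one_smul] at e1
            rw [← e1]
            exact hXconv (hz1 s hs) (hz2 s hs) hu1 hu2 hu12
        exact hZ hx t ht
      beta_reduce
      have hy0 : (∑ mm : (Σ k : K, Fin (p k)), lst mm • v mm.1 mm.2) ∈ X :=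
        Convex.sum_mem hXconv (fun mm _ => hlst mm) hsumst (fun mm _ => hvX mm)
      have hind : ∀ s : Finset ((Σ k : K, Fin (q k))), ∀ z ∈ X,
          z + ∑ mm ∈ s, mst mm • r mm.1 mm.2 ∈ X := by
        intro s
        induction s using Finset.induction_on with
        | empty => intro z hz; simpa using hz
        | @insert mm s hni ih =>
          intro z hz
          rw [Finset.sum_insert hni]
          have hstep := hray mm (mst mm) (hmst mm) _ (ih z hz)
          have : z + (mst mm • r mm.1 mm.2 + ∑ x ∈ s, mst x • r x.1 x.2)
              = (z + ∑ x ∈ s, mst x • r x.1 x.2) + mst mm • r mm.1 mm.2 := by abel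
          rw [this]
          exact hstep
      have := hind Finset.univ _ hy0
      exact this
  rw [hXY]
  exact hYpoly

end main

section final

lemma dot_neg_right {d : ℕ} (a u : Fin d → ℝ) : dot a (-u) = - dot a u := by
  rw [dot_comm, dot_neg_left, dot_comm]

theorem stmt2' {d : ℕ} (P L : Set (Fin d → ℝ))
    (hP : IsPolyhedron P)
    (hL : IsPolyhedron L)
    (hrec : IsLinearSubspaceSet (recCone L)) :
    IsPolyhedron (convexHull ℝ (P \ interior L)) := by
  classical
  by_cases hLe : L = ∅
  · rw [hLe, interior_empty, Set.diff_empty, Convex.convexHull_eq (poly_convex hP)]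
    exact hP
  · obtain ⟨nL, a, b, hLrep⟩ := hL
    obtain ⟨nP, c, e, hPrep⟩ := hP
    have hLne : L.Nonempty := Set.nonempty_iff_ne_empty.mpr hLe
    have hiter : ∀ u, u ∈ recCone L → ∀ x ∈ L, ∀ n : ℕ, x + (n : ℝ) • u ∈ L := by
      intro u hu x hx n
      induction n with
      | zero => simpa using hx
      | succ n ih =>
        have hmem := hu _ ih
        have heq : x + ((n+1 : ℕ) : ℝ) • u = (x + (n:ℝ) • u) + u := by
          push_cast
          rw [add_smul, one_smul]
          abel
        rw [heq]
        exact hmem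
    have hrecsub : ∀ u, u ∈ recCone L → ∀ k, dot (a k) u ≤ 0 := by
      intro u hu k
      by_contra hpos
      push_neg at hpos
      obtain ⟨x₀, hx₀⟩ := hLne
      obtain ⟨n, hn⟩ := exists_nat_gt ((b k - dot (a k) x₀) / dot (a k) u)
      have hmem := hiter u hu x₀ hx₀ n
      rw [hLrep] at hmem
      have hk := hmem k
      rw [dot_add_right, dot_smul_right] at hk
      rw [div_lt_iff₀ hpos] at hn
      linarith
    have hW : ∀ u, (∀ k, dot (a k) u ≤ 0) → ∀ k, dot (a k) u = 0 := by
      intro u hu k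
      obtain ⟨W, hWeq⟩ := hrec
      have h1 : u ∈ recCone L := by
        intro x hx
        rw [hLrep] at hx ⊢
        intro k'
        rw [dot_add_right]
        linarith [hx k', hu k']
      have h2 : -u ∈ recCone L := by
        rw [hWeq] at h1 ⊢
        simp only [SetLike.mem_coe] at h1 ⊢
        exact W.neg_mem h1
      have h3 := hrecsub (-u) h2 k
      rw [dot_neg_right] at h3
      linarith [hu k]
    have hbad : ∀ k, a k = 0 → (0:ℝ) ≤ b k := by
      intro k hk
      obtain ⟨x₀, hx₀⟩ := hLne
      rw [hLrep] at hx₀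
      have := hx₀ k
      rwa [hk, dot_zero_left] at this
    have hint : interior L = {x | ∀ k, a k ≠ 0 → dot (a k) x < b k} := by
      apply Set.Subset.antisymm
      · intro x hx k hak
        have hxn : L ∈ nhds x := mem_interior_iff_mem_nhds.mp hx
        obtain ⟨ε, hε, hball⟩ := Metric.mem_nhds_iff.mp hxn
        set δ := ε / (2 * (‖a k‖ + 1)) with hδ
        have hδpos : 0 < δ := by positivity
        have hy : x + δ • a k ∈ L := by
          apply hball
          rw [Metric.mem_ball, dist_eq_norm]
          have heq : x + δ • a k - x = δ • a k := by abel
          rw [heq, norm_smul]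
          simp only [Real.norm_eq_abs, abs_of_pos hδpos]
          calc δ * ‖a k‖ < δ * (2 * (‖a k‖ + 1)) := by
                apply mul_lt_mul_of_pos_left _ hδpos
                nlinarith [norm_nonneg (a k)]
            _ = ε := by
                rw [hδ]
                field_simp
        rw [hLrep] at hy
        have h1 := hy k
        rw [dot_add_right, dot_smul_right] at h1
        have h2 := dot_self_pos hak
        have hx' : x ∈ L := interior_subset hx
        rw [hLrep] at hx'
        have h3 := hx' k
        rcases lt_or_eq_of_le h3 with h | h
        · exact h
        · exfalso
          nlinarith
      · apply interior_maximal
        · intro x hx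
          rw [hLrep]
          intro k
          by_cases hak : a k = 0
          · rw [hak, dot_zero_left]
            exact hbad k hak
          · exact le_of_lt (hx k hak)
        · have hopen : {x : Fin d → ℝ | ∀ k, a k ≠ 0 → dot (a k) x < b k}
              = ⋂ k : {k : Fin nL // a k ≠ 0}, {x | dot (a k.1) x < b k.1} := by
            ext x
            simp only [Set.mem_setOf_eq, Set.mem_iInter, Subtype.forall]
          rw [hopen]
          exact isOpen_iInter_of_finite fun k =>
            isOpen_lt (continuous_dot _) continuous_const
    have hdiff : P \ interior L = ⋃ k : {k : Fin nL // a k ≠ 0},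
        ({x : Fin d → ℝ | ∀ i, dot (c i) x ≤ e i} ∩ {x | b k.1 ≤ dot (a k.1) x}) := by
      rw [hint, hPrep]
      ext x
      simp only [Set.mem_diff, Set.mem_setOf_eq, Set.mem_iUnion, Set.mem_inter_iff,
        Subtype.exists]
      constructor
      · rintro ⟨hxP, hxI⟩
        push_neg at hxI
        obtain ⟨k, hk1, hk2⟩ := hxI
        exact ⟨k, hk1, hxP, hk2⟩
      · rintro ⟨k, hk, hxP, hxk⟩
        exact ⟨hxP, fun h => absurd (h k hk) (not_lt.mpr hxk)⟩
    rw [hdiff]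
    exact main_hull c e a b hW

end final

end aux

theorem stmt2 {d : ℕ} (P L : Set (Fin d → ℝ))
    (hP : IsPolyhedron P) (hPfree : LineFree P)
    (hL : IsPolyhedron L) (hLdim : adim L = d)
    (hrec : IsLinearSubspaceSet (recCone L)) :
    IsPolyhedron (convexHull ℝ (P \ interior L)) := stmt2' P L hP hL hrec
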